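/- arXiv:0910.2875 — 3 statements merged into one kernel-verified Lean document; each statement's English description precedes it below -/
import Mathlib

section
/- Let (φ_{s,t}) be an evolution family in ℍ with common Denjoy–Wolff point ∞. The following are equivalent: (i) for every w ∈ ℍ and every s ≥ 0, |φ_{s,t}(w)| → +∞ as t → +∞; (ii) there exist w₀ ∈ ℍ and s₀ ≥ 0 such that |φ_{s₀,t}(w₀)| → +∞ as t → +∞. Moreover, when (i) holds, the convergence to ∞ is uniform on compact subsets: for every s ≥ 0, every compact K ⊂ ℍ and every M > 0 there exists T ≥ s such that |φ_{s,t}(w)| ≥ M for all w ∈ K and all t ≥ T. -/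
open Complex MeasureTheory Set Filter Topology
open ComplexConjugate Metric

/-- The right half-plane `ℍ = {w : Re w > 0}`. -/
def RHP : Set ℂ := {w : ℂ | 0 < w.re}

/-- An evolution family in the right half-plane with common Denjoy-Wolff point `∞`,
together with its associated (Herglotz) vector field `F`. -/
structure EvolutionFamilyRHP where
  φ : ℝ → ℝ → ℂ → ℂ
  F : ℂ → ℝ → ℂ
  mapsTo : ∀ ⦃s t : ℝ⦄, 0 ≤ s → s ≤ t → Set.MapsTo (φ s t) RHP RHP
  holo : ∀ ⦃s t : ℝ⦄, 0 ≤ s → s ≤ t → DifferentiableOn ℂ (φ s t) RHP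
  id_eq : ∀ ⦃s : ℝ⦄, 0 ≤ s → ∀ w ∈ RHP, φ s s w = w
  comp : ∀ ⦃s u t : ℝ⦄, 0 ≤ s → s ≤ u → u ≤ t → ∀ w ∈ RHP,
    φ s t w = φ u t (φ s u w)
  F_meas : ∀ w ∈ RHP, Measurable (F w)
  F_holo : ∀ t : ℝ, 0 ≤ t → DifferentiableOn ℂ (fun w => F w t) RHP
  F_re_nonneg : ∀ w ∈ RHP, ∀ t : ℝ, 0 ≤ t → 0 ≤ (F w t).re
  F_bound : ∀ K : Set ℂ, K ⊆ RHP → IsCompact K → ∀ T : ℝ, 0 < T →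
    ∃ k : ℝ → ℝ, (∀ t, 0 ≤ k t) ∧ MeasureTheory.IntegrableOn k (Set.Icc 0 T) ∧
      ∀ w ∈ K, ∀ᵐ t ∂(MeasureTheory.volume.restrict (Set.Icc (0:ℝ) T)),
        ‖F w t‖ ≤ k t
  integral_eq : ∀ ⦃s t : ℝ⦄, 0 ≤ s → s ≤ t → ∀ w ∈ RHP,
    φ s t w = w + ∫ ξ in s..t, F (φ s ξ w) ξ

lemma RHP_add_conj_ne {a w : ℂ} (ha : a ∈ RHP) (hw : w ∈ RHP) : w + conj a ≠ 0 := by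
  intro h
  have h2 : (w + conj a).re = 0 := by rw [h]; simp
  simp only [Complex.add_re, Complex.conj_re] at h2
  have := ha; have := hw
  simp only [RHP, Set.mem_setOf_eq] at *
  linarith

lemma RHP_abs_sub_lt {a w : ℂ} (ha : a ∈ RHP) (hw : w ∈ RHP) :
    ‖w - a‖ < ‖w + conj a‖ := by
  have ha' : 0 < a.re := ha
  have hw' : 0 < w.re := hw
  rw [Complex.norm_def, Complex.norm_def]
  apply Real.sqrt_lt_sqrt (Complex.normSq_nonneg _)
  simp only [Complex.normSq_apply, Complex.sub_re, Complex.sub_im, Complex.add_re,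
    Complex.add_im, Complex.conj_re, Complex.conj_im]
  nlinarith

lemma schwarzPickRHP {f : ℂ → ℂ} (hd : DifferentiableOn ℂ f RHP) (hm : MapsTo f RHP RHP)
    {z z' : ℂ} (hz : z ∈ RHP) (hz' : z' ∈ RHP) :
    ‖f z' - f z‖ * ‖z' + conj z‖ ≤
      ‖z' - z‖ * ‖f z' + conj (f z)‖ := by
  have hfz : f z ∈ RHP := hm hz
  have hfz' : f z' ∈ RHP := hm hz'
  set ψ : ℂ → ℂ := fun ζ => (z + conj z * ζ) / (1 - ζ) with hψ
  have hne : ∀ ζ : ℂ, ζ ∈ ball (0:ℂ) 1 → (1:ℂ) - ζ ≠ 0 := by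
    intro ζ hζ h
    have : ζ = 1 := by linear_combination -h
    rw [this] at hζ
    simp at hζ
  have hψd : DifferentiableOn ℂ ψ (ball (0:ℂ) 1) := by
    apply DifferentiableOn.div (by fun_prop) (by fun_prop) hne
  have hψmaps : MapsTo ψ (ball (0:ℂ) 1) RHP := by
    intro ζ hζ
    have hζ1 : ζ.re * ζ.re + ζ.im * ζ.im < 1 := by
      have : ‖ζ‖ < 1 := by
        simpa using mem_ball_zero_iff.1 hζ
      have h3 : ζ.re * ζ.re + ζ.im * ζ.im = (‖ζ‖)^2 := by
        rw [Complex.sq_norm, Complex.normSq_apply]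
      nlinarith [norm_nonneg ζ]
    show 0 < ((z + conj z * ζ) / (1 - ζ)).re
    rw [Complex.div_re, ← add_div]
    apply div_pos ?_ (Complex.normSq_pos.2 (hne ζ hζ))
    have hz' : 0 < z.re := hz
    simp only [Complex.add_re, Complex.add_im, Complex.mul_re, Complex.mul_im,
      Complex.sub_re, Complex.sub_im, Complex.conj_re, Complex.conj_im,
      Complex.one_re, Complex.one_im]
    nlinarith [mul_pos hz' (by linarith : (0:ℝ) < 1 - (ζ.re * ζ.re + ζ.im * ζ.im))]
  have hψ0 : ψ 0 = z := by simp [hψ]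
  set ζ₀ : ℂ := (z' - z) / (z' + conj z) with hζ₀def
  have hBpos : 0 < ‖z' + conj z‖ :=
    (norm_pos_iff.mpr (RHP_add_conj_ne hz hz'))
  have hζ₀lt : ‖ζ₀‖ < 1 := by
    rw [hζ₀def, norm_div, div_lt_one hBpos]
    exact RHP_abs_sub_lt hz hz'
  have hζ₀mem : ζ₀ ∈ ball (0:ℂ) 1 := by
    simpa using hζ₀lt
  have hψζ₀ : ψ ζ₀ = z' := by
    have h1 : z' + conj z ≠ 0 := RHP_add_conj_ne hz hz'
    have h2 : (1:ℂ) - ζ₀ ≠ 0 := hne ζ₀ hζ₀mem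
    rw [hψ]
    simp only []
    rw [div_eq_iff h2, hζ₀def]
    field_simp
    ring
  set a : ℂ := f z with ha
  set g : ℂ → ℂ := fun ζ => (f (ψ ζ) - a) / (f (ψ ζ) + conj a) with hg
  have hgd : DifferentiableOn ℂ g (ball (0:ℂ) 1) := by
    have hfc : DifferentiableOn ℂ (fun ζ => f (ψ ζ)) (ball (0:ℂ) 1) :=
      hd.comp hψd hψmaps
    exact DifferentiableOn.div (hfc.sub (differentiableOn_const _))
      (hfc.add (differentiableOn_const _))
      (fun ζ hζ => RHP_add_conj_ne hfz (hm (hψmaps hζ)))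
  have hgm : MapsTo g (ball (0:ℂ) 1) (ball (0:ℂ) 1) := by
    intro ζ hζ
    have hu : f (ψ ζ) ∈ RHP := hm (hψmaps hζ)
    rw [mem_ball_zero_iff]
    simp only [hg, norm_div]
    rw [div_lt_one (norm_pos_iff.mpr (RHP_add_conj_ne hfz hu))]
    exact RHP_abs_sub_lt hfz hu
  have hg0 : g 0 = 0 := by
    simp [hg, hψ0, ha]
  have hsch : ‖g ζ₀‖ ≤ ‖ζ₀‖ :=
    Complex.norm_le_norm_of_mapsTo_ball hgd (hgm.mono_right ball_subset_closedBall) hg0 hζ₀lt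
  rw [hg] at hsch
  simp only [hψζ₀] at hsch
  rw [hζ₀def, norm_div, norm_div] at hsch
  rw [div_le_div_iff₀ (norm_pos_iff.mpr (RHP_add_conj_ne hfz hfz')) hBpos] at hsch
  rw [ha] at hsch
  linarith

/-- The comparison constant, based at `z`, evaluated at `z'`. -/
noncomputable def cRHP (z z' : ℂ) : ℝ :=
  (‖z' + conj z‖ - ‖z' - z‖) /
    (‖z' + conj z‖ + ‖z' - z‖)

lemma cRHP_pos {z z' : ℂ} (hz : z ∈ RHP) (hz' : z' ∈ RHP) : 0 < cRHP z z' := by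
  have hAB := RHP_abs_sub_lt hz hz'
  have hA0 : 0 ≤ ‖z' - z‖ := norm_nonneg _
  exact div_pos (by linarith) (by linarith)

lemma compareRHP {f : ℂ → ℂ} (hd : DifferentiableOn ℂ f RHP) (hm : MapsTo f RHP RHP)
    {z z' : ℂ} (hz : z ∈ RHP) (hz' : z' ∈ RHP) :
    cRHP z z' * ‖f z‖ ≤ ‖f z'‖ := by
  have key := schwarzPickRHP hd hm hz hz'
  have hfz : f z ∈ RHP := hm hz
  have hfz' : f z' ∈ RHP := hm hz'
  simp only [cRHP]
  set A := ‖z' - z‖ with hA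
  set B := ‖z' + conj z‖ with hB
  have hAB : A < B := RHP_abs_sub_lt hz hz'
  have hA0 : 0 ≤ A := norm_nonneg _
  have h1 : ‖f z‖ ≤ ‖f z'‖ + ‖f z' - f z‖ := by
    have h := norm_sub_le (f z') (f z' - f z)
    simp only [sub_sub_cancel] at h
    simpa using h
  have h2 : ‖f z' + conj (f z)‖ ≤ ‖f z'‖ + ‖f z‖ := by
    calc ‖f z' + conj (f z)‖
        ≤ ‖f z'‖ + ‖conj (f z)‖ := norm_add_le _ _
      _ = ‖f z'‖ + ‖f z‖ := by rw [Complex.norm_conj]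
  have hkey2 : (B - A) * ‖f z‖ ≤ (B + A) * ‖f z'‖ := by
    nlinarith [norm_nonneg (f z), norm_nonneg (f z'),
      norm_nonneg (f z' - f z)]
  rw [div_mul_eq_mul_div, div_le_iff₀ (by linarith : (0:ℝ) < B + A)]
  nlinarith

lemma one_mem_RHP : (1:ℂ) ∈ RHP := by simp [RHP]

/-- [Step I of the boundary Denjoy-Wolff theorem]  For an evolution family in `ℍ` with
common Denjoy-Wolff point `∞`: pointwise convergence to `∞` for all `(s,w)` is equivalent
to convergence to `∞` for a single `(s₀,w₀)`, and in that case the convergence to `∞` is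
uniform on compact subsets of `ℍ`. -/
theorem evolutionFamilyRHP_tendsto_infty_iff (E : EvolutionFamilyRHP) :
    ((∀ w ∈ RHP, ∀ s : ℝ, 0 ≤ s →
        Tendsto (fun t => ‖E.φ s t w‖) atTop atTop) ↔
      (∃ w₀ ∈ RHP, ∃ s₀ : ℝ, 0 ≤ s₀ ∧
        Tendsto (fun t => ‖E.φ s₀ t w₀‖) atTop atTop)) ∧
    ((∀ w ∈ RHP, ∀ s : ℝ, 0 ≤ s →
        Tendsto (fun t => ‖E.φ s t w‖) atTop atTop) →
      ∀ s : ℝ, 0 ≤ s → ∀ K : Set ℂ, K ⊆ RHP → IsCompact K → ∀ M : ℝ, 0 < M →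
        ∃ T : ℝ, s ≤ T ∧ ∀ w ∈ K, ∀ t : ℝ, T ≤ t → M ≤ ‖E.φ s t w‖) := by
  constructor
  · constructor
    · intro h
      exact ⟨1, one_mem_RHP, 0, le_rfl, h 1 one_mem_RHP 0 le_rfl⟩
    · rintro ⟨w₀, hw₀, s₀, hs₀, htend⟩ w hw s hs
      set u := max s s₀ with hu
      have hsu : s ≤ u := le_max_left _ _
      have hs₀u : s₀ ≤ u := le_max_right _ _
      have hu0 : 0 ≤ u := le_trans hs hsu
      set z : ℂ := E.φ s₀ u w₀ with hzdef
      set z' : ℂ := E.φ s u w with hz'def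
      have hzm : z ∈ RHP := E.mapsTo hs₀ hs₀u hw₀
      have hz'm : z' ∈ RHP := E.mapsTo hs hsu hw
      have hc : 0 < cRHP z z' := cRHP_pos hzm hz'm
      have h1 : Tendsto (fun t => ‖E.φ u t z‖) atTop atTop := by
        apply htend.congr'
        filter_upwards [eventually_ge_atTop u] with t ht
        rw [E.comp hs₀ hs₀u ht w₀ hw₀]
      have h2 : Tendsto (fun t => cRHP z z' * ‖E.φ u t z‖) atTop atTop :=
        h1.const_mul_atTop hc
      apply tendsto_atTop_mono' _ ?_ h2
      filter_upwards [eventually_ge_atTop u] with t ht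
      rw [E.comp hs hsu ht w hw]
      exact compareRHP (E.holo hu0 ht) (E.mapsTo hu0 ht) hzm hz'm
  · intro h s hs K hK hKc M hM
    rcases K.eq_empty_or_nonempty with rfl | hKne
    · exact ⟨s, le_rfl, by simp⟩
    have hcont : ContinuousOn (fun w => cRHP 1 w) K := by
      simp only [cRHP]
      apply ContinuousOn.div
      · exact ((continuous_norm.comp (continuous_id.add continuous_const)).sub
          (continuous_norm.comp (continuous_id.sub continuous_const))).continuousOn
      · exact ((continuous_norm.comp (continuous_id.add continuous_const)).add
          (continuous_norm.comp (continuous_id.sub continuous_const))).continuousOn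
      · intro w hwK
        have hw : w ∈ RHP := hK hwK
        have h1 := RHP_abs_sub_lt one_mem_RHP hw
        have h2 := norm_nonneg (w - 1)
        intro hcc
        linarith [hcc ▸ (by linarith : (0:ℝ) < ‖w + conj 1‖ + ‖w - 1‖)]
    obtain ⟨w₂, hw₂K, hmin⟩ := hKc.exists_isMinOn hKne hcont
    set c₀ := cRHP 1 w₂ with hc₀def
    have hc₀ : 0 < c₀ := cRHP_pos one_mem_RHP (hK hw₂K)
    have h1 : Tendsto (fun t => ‖E.φ s t 1‖) atTop atTop :=
      h 1 one_mem_RHP s hs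
    obtain ⟨T₀, hT₀⟩ := Filter.eventually_atTop.1 (tendsto_atTop.1 h1 (M / c₀))
    refine ⟨max s T₀, le_max_left _ _, ?_⟩
    intro w hwK t ht
    have hst : s ≤ t := le_trans (le_max_left _ _) ht
    have hcw : c₀ ≤ cRHP 1 w := isMinOn_iff.mp hmin w hwK
    have hX : M / c₀ ≤ ‖E.φ s t 1‖ := hT₀ t (le_trans (le_max_right _ _) ht)
    have hcomp := compareRHP (E.holo hs hst) (E.mapsTo hs hst) one_mem_RHP (hK hwK)
    calc M = c₀ * (M / c₀) := by field_simp
      _ ≤ cRHP 1 w * ‖E.φ s t 1‖ :=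
          mul_le_mul hcw hX (by positivity) (cRHP_pos one_mem_RHP (hK hwK)).le
      _ ≤ _ := hcomp
end

section
/- Let (φ_{s,t}) be an evolution family in ℍ with common Denjoy–Wolff point ∞, with associated function F as in the context. If there exists w ∈ ℍ such that t ↦ F(w,t) is integrable on [0,+∞), i.e. ∫₀^∞ |F(w,t)| dt < +∞, then for every s ≥ 0 and every w' ∈ ℍ one has sup{ Re φ_{s,t}(w') : t ≥ s } < +∞ (in particular the family does not satisfy Re φ_{s,t}(w') → +∞). -/
open Complex MeasureTheory Set Filter Topology

open ComplexConjugate Metric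

noncomputable def Complex.abs : AbsoluteValue ℂ ℝ := NormedField.toAbsoluteValue ℂ

lemma Complex.norm_eq_abs (z : ℂ) : ‖z‖ = Complex.abs z := rfl

lemma Complex.abs_apply (z : ℂ) : Complex.abs z = Real.sqrt (Complex.normSq z) :=
  Complex.norm_def z

lemma Complex.re_le_abs (z : ℂ) : z.re ≤ Complex.abs z := Complex.re_le_norm z

lemma Complex.sq_abs (z : ℂ) : Complex.abs z ^ 2 = Complex.normSq z := Complex.sq_norm z

lemma Complex.abs_two : Complex.abs 2 = 2 := show ‖(2:ℂ)‖ = 2 by simp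

lemma Complex.abs_ofReal (r : ℝ) : Complex.abs r = |r| := show ‖(r:ℂ)‖ = |r| by simp

lemma Complex.continuous_abs : Continuous Complex.abs := continuous_norm

lemma Complex.abs_le_abs_of_mapsTo_ball_self {f : ℂ → ℂ} {z : ℂ}
    (hd : DifferentiableOn ℂ f (ball 0 1)) (h : MapsTo f (ball 0 1) (ball 0 1))
    (h0 : f 0 = 0) (hz : Complex.abs z < 1) : Complex.abs (f z) ≤ Complex.abs z :=
  Complex.norm_le_norm_of_mapsTo_ball hd (h.mono_right ball_subset_closedBall) h0 hz


lemma mem_RHP_iff {z : ℂ} : z ∈ RHP ↔ 0 < z.re := Iff.rfl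

lemma normSq_identity (z w : ℂ) :
    Complex.normSq (z + conj w) = Complex.normSq (z - w) + 4 * z.re * w.re := by
  simp only [Complex.normSq_apply, Complex.add_re, Complex.add_im, Complex.sub_re,
    Complex.sub_im, Complex.conj_re, Complex.conj_im]
  ring

lemma abs_sub_lt_abs_add {z w : ℂ} (hz : z ∈ RHP) (hw : w ∈ RHP) :
    Complex.abs (z - w) < Complex.abs (z + conj w) := by
  rw [mem_RHP_iff] at hz hw
  rw [Complex.abs_apply, Complex.abs_apply]
  apply Real.sqrt_lt_sqrt (Complex.normSq_nonneg _)
  rw [normSq_identity]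
  nlinarith

lemma two_re_le_abs_add {z w : ℂ} (hz : z ∈ RHP) (hw : w ∈ RHP) (hle : w.re ≤ z.re) :
    2 * w.re ≤ Complex.abs (z + conj w) := by
  rw [mem_RHP_iff] at hz hw
  have h := Complex.re_le_abs (z + conj w)
  simp only [Complex.add_re, Complex.conj_re] at h
  linarith

lemma abs_add_pos {z w : ℂ} (hz : z ∈ RHP) (hw : w ∈ RHP) :
    0 < Complex.abs (z + conj w) := by
  rw [mem_RHP_iff] at hz hw
  have h := Complex.re_le_abs (z + conj w)
  simp only [Complex.add_re, Complex.conj_re] at h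
  linarith

lemma add_conj_ne_zero {z w : ℂ} (hz : z ∈ RHP) (hw : w ∈ RHP) : z + conj w ≠ 0 := by
  intro h
  have := abs_add_pos hz hw
  rw [h] at this; simp at this

noncomputable def cay (w ζ : ℂ) : ℂ := (ζ - w) / (ζ + conj w)
noncomputable def cayInv (w ζ : ℂ) : ℂ := (w + ζ * conj w) / (1 - ζ)

lemma cay_self (w : ℂ) : cay w w = 0 := by simp [cay]

lemma cayInv_zero (w : ℂ) : cayInv w 0 = w := by simp [cayInv]

lemma cay_mem_ball {z w : ℂ} (hz : z ∈ RHP) (hw : w ∈ RHP) :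
    cay w z ∈ ball (0:ℂ) 1 := by
  rw [mem_ball_zero_iff, cay, Complex.norm_eq_abs, map_div₀, div_lt_one (abs_add_pos hz hw)]
  exact abs_sub_lt_abs_add hz hw

lemma one_sub_ne_of_ball {ζ : ℂ} (hζ : ζ ∈ ball (0:ℂ) 1) : (1:ℂ) - ζ ≠ 0 := by
  rw [mem_ball_zero_iff] at hζ
  intro h
  have : ζ = 1 := by linear_combination -h
  rw [this] at hζ; norm_num at hζ

lemma cayInv_mem {w ζ : ℂ} (hw : w ∈ RHP) (hζ : ζ ∈ ball (0:ℂ) 1) :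
    cayInv w ζ ∈ RHP := by
  have h1 : (1:ℂ) - ζ ≠ 0 := one_sub_ne_of_ball hζ
  rw [mem_RHP_iff, cayInv, Complex.div_re]
  have hnum : (w + ζ * conj w).re * (1 - ζ).re + (w + ζ * conj w).im * (1 - ζ).im
      = w.re * (1 - Complex.normSq ζ) := by
    simp only [Complex.add_re, Complex.add_im, Complex.mul_re, Complex.mul_im,
      Complex.sub_re, Complex.sub_im, Complex.one_re, Complex.one_im,
      Complex.conj_re, Complex.conj_im, Complex.normSq_apply]
    ring
  rw [← add_div, hnum]
  have hζ' : Complex.normSq ζ < 1 := by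
    rw [mem_ball_zero_iff, Complex.norm_eq_abs] at hζ
    have h := Complex.sq_abs ζ
    nlinarith [Complex.abs.nonneg ζ]
  have hden : 0 < Complex.normSq (1 - ζ) := Complex.normSq_pos.2 h1
  rw [mem_RHP_iff] at hw
  exact div_pos (mul_pos hw (by linarith)) hden

lemma cayInv_cay {z w : ℂ} (hz : z ∈ RHP) (hw : w ∈ RHP) : cayInv w (cay w z) = z := by
  have hd : z + conj w ≠ 0 := add_conj_ne_zero hz hw
  have h2 : (1:ℂ) - cay w z ≠ 0 := one_sub_ne_of_ball (cay_mem_ball hz hw)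
  have h3 : w + conj w ≠ 0 := by
    intro h
    apply h2
    rw [cay]
    field_simp
    linear_combination h
  rw [cay, cayInv]
  field_simp [hd, h3]
  linear_combination z * mul_inv_cancel₀ h3

lemma cay_differentiableOn {w : ℂ} (hw : w ∈ RHP) :
    DifferentiableOn ℂ (cay w) RHP := by
  apply DifferentiableOn.div
  · exact (differentiable_id.sub_const w).differentiableOn
  · exact (differentiable_id.add_const (conj w)).differentiableOn
  · intro z hz; exact add_conj_ne_zero hz hw

lemma cayInv_differentiableOn (w : ℂ) :
    DifferentiableOn ℂ (cayInv w) (ball (0:ℂ) 1) := by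
  apply DifferentiableOn.div
  · exact (differentiable_const w |>.add (differentiable_id.mul_const (conj w))).differentiableOn
  · exact ((differentiable_const (1:ℂ)).sub differentiable_id).differentiableOn
  · intro ζ hζ; exact one_sub_ne_of_ball hζ

/-- Schwarz–Pick inequality for holomorphic self-maps of the right half-plane. -/
lemma schwarzPick {G : ℂ → ℂ} (hd : DifferentiableOn ℂ G RHP) (hm : MapsTo G RHP RHP)
    {z w : ℂ} (hz : z ∈ RHP) (hw : w ∈ RHP) :
    Complex.abs (G z - G w) * Complex.abs (z + conj w) ≤
      Complex.abs (G z + conj (G w)) * Complex.abs (z - w) := by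
  have hGz : G z ∈ RHP := hm hz
  have hGw : G w ∈ RHP := hm hw
  set f : ℂ → ℂ := fun ζ => cay (G w) (G (cayInv w ζ)) with hf
  have hmTo : MapsTo (cayInv w) (ball (0:ℂ) 1) RHP := fun ζ hζ => cayInv_mem hw hζ
  have h1 : DifferentiableOn ℂ f (ball 0 1) := by
    apply DifferentiableOn.comp (cay_differentiableOn hGw)
      (DifferentiableOn.comp hd (cayInv_differentiableOn w) hmTo)
    exact fun ζ hζ => hm (hmTo hζ)
  have hmapsf : MapsTo f (ball (0:ℂ) 1) (ball (0:ℂ) 1) := by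
    intro ζ hζ
    exact cay_mem_ball (hm (hmTo hζ)) hGw
  have hf0 : f 0 = 0 := by
    simp only [hf, cayInv_zero, cay_self]
  have hzball := cay_mem_ball hz hw
  have habs : Complex.abs (cay w z) < 1 := by
    rwa [mem_ball_zero_iff, Complex.norm_eq_abs] at hzball
  have key := Complex.abs_le_abs_of_mapsTo_ball_self h1 hmapsf hf0 habs
  simp only [hf] at key
  rw [cayInv_cay hz hw] at key
  rw [cay, cay, map_div₀, map_div₀,
    div_le_div_iff₀ (abs_add_pos hGz hGw) (abs_add_pos hz hw)] at key
  rw [mul_comm (Complex.abs (z - w))] at key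
  exact key


/-- Difference bound for holomorphic functions with nonnegative real part on `RHP`. -/
lemma herglotz_bound {G : ℂ → ℂ} (hd : DifferentiableOn ℂ G RHP)
    (hre : ∀ z ∈ RHP, 0 ≤ (G z).re) {z w : ℂ} (hz : z ∈ RHP) (hw : w ∈ RHP) :
    Complex.abs (G z - G w) * Complex.abs (z + conj w) ≤
      (Complex.abs (G z - G w) + 2 * (G w).re) * Complex.abs (z - w) := by
  have key : ∀ ε : ℝ, 0 < ε →
      Complex.abs (G z - G w) * Complex.abs (z + conj w) ≤
      (Complex.abs (G z - G w) + 2 * (G w).re) * Complex.abs (z - w)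
        + ε * (2 * Complex.abs (z - w)) := by
    intro ε hε
    set Gε : ℂ → ℂ := fun ζ => G ζ + (ε : ℂ) with hGε
    have hd' : DifferentiableOn ℂ Gε RHP := hd.add_const _
    have hm' : MapsTo Gε RHP RHP := by
      intro ζ hζ
      have h0 := hre ζ hζ
      simp only [hGε, mem_RHP_iff, Complex.add_re, Complex.ofReal_re]
      linarith
    have h := schwarzPick hd' hm' hz hw
    have e1 : Gε z - Gε w = G z - G w := by simp only [hGε]; ring
    have conj_eq : Gε z + conj (Gε w)
        = (G z - G w) + 2 * ((G w).re : ℂ) + 2 * (ε : ℂ) := by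
      have hc : G w + conj (G w) = 2 * ((G w).re : ℂ) := by
        rw [Complex.add_conj]; push_cast; ring
      simp only [hGε, map_add, Complex.conj_ofReal]
      linear_combination hc
    have e2 : Complex.abs (Gε z + conj (Gε w))
        ≤ Complex.abs (G z - G w) + 2 * (G w).re + 2 * ε := by
      rw [conj_eq]
      have t1 := Complex.abs.add_le ((G z - G w) + 2 * ((G w).re : ℂ)) (2 * (ε : ℂ))
      have t2 := Complex.abs.add_le (G z - G w) (2 * ((G w).re : ℂ))
      have e3 : Complex.abs (2 * ((G w).re : ℂ)) = 2 * (G w).re := by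
        rw [map_mul, Complex.abs_two, Complex.abs_ofReal, _root_.abs_of_nonneg (hre w hw)]
      have e4 : Complex.abs (2 * (ε : ℂ)) = 2 * ε := by
        rw [map_mul, Complex.abs_two, Complex.abs_ofReal, _root_.abs_of_nonneg hε.le]
      rw [e3] at t2
      rw [e4] at t1
      linarith
    rw [e1] at h
    have hr : 0 ≤ Complex.abs (z - w) := Complex.abs.nonneg _
    nlinarith [mul_le_mul_of_nonneg_right e2 hr]
  rcases eq_or_ne z w with rfl | hne
  · simp
  · have hzw : 0 < Complex.abs (z - w) := Complex.abs.pos (sub_ne_zero.2 hne)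
    refine le_of_forall_pos_le_add fun δ hδ => ?_
    have hk := key (δ / (2 * Complex.abs (z - w))) (by positivity)
    have : δ / (2 * Complex.abs (z - w)) * (2 * Complex.abs (z - w)) = δ := by
      field_simp
    rw [this] at hk
    exact hk

/-- If `z` is in the half-disc around `w`, a Herglotz function moves `z` by at most
`(2/3) Re G w`. -/
lemma herglotz_close {G : ℂ → ℂ} (hd : DifferentiableOn ℂ G RHP)
    (hre : ∀ z ∈ RHP, 0 ≤ (G z).re) {z w : ℂ} (hz : z ∈ RHP) (hw : w ∈ RHP)
    (h1 : w.re ≤ z.re) (h2 : Complex.abs (z - w) ≤ w.re / 2) :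
    Complex.abs (G z - G w) ≤ 2 / 3 * (G w).re := by
  have hB := herglotz_bound hd hre hz hw
  have habs := two_re_le_abs_add hz hw h1
  have hwre : 0 < w.re := hw
  have hA : 0 ≤ Complex.abs (G z - G w) := Complex.abs.nonneg _
  have hh : 0 ≤ (G w).re := hre w hw
  have hr : 0 ≤ Complex.abs (z - w) := Complex.abs.nonneg _
  nlinarith [mul_nonneg hA (sub_nonneg.2 habs),
    mul_nonneg (by linarith : (0:ℝ) ≤ Complex.abs (G z - G w) + 2 * (G w).re)
      (by linarith : (0:ℝ) ≤ w.re / 2 - Complex.abs (z - w))]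

/-- Harnack-type bound: transfer of `Re G` between two points at pseudo-hyperbolic
distance at most `ρ`. -/
lemma herglotz_re_le {G : ℂ → ℂ} (hd : DifferentiableOn ℂ G RHP)
    (hre : ∀ z ∈ RHP, 0 ≤ (G z).re) {z w : ℂ} (hz : z ∈ RHP) (hw : w ∈ RHP)
    {ρ : ℝ} (hρ1 : ρ < 1)
    (hρ : Complex.abs (z - w) ≤ ρ * Complex.abs (z + conj w)) :
    (G z).re ≤ (1 + ρ) / (1 - ρ) * (G w).re := by
  have hB := herglotz_bound hd hre hz hw
  have hR : 0 < Complex.abs (z + conj w) := abs_add_pos hz hw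
  have hA : 0 ≤ Complex.abs (G z - G w) := Complex.abs.nonneg _
  have hr : 0 ≤ Complex.abs (z - w) := Complex.abs.nonneg _
  have hh : 0 ≤ (G w).re := hre w hw
  have hA' : Complex.abs (G z - G w) * (1 - ρ) ≤ 2 * ρ * (G w).re := by
    nlinarith [mul_nonneg (by linarith : (0:ℝ) ≤ Complex.abs (G z - G w) + 2 * (G w).re)
      (by linarith : (0:ℝ) ≤ ρ * Complex.abs (z + conj w) - Complex.abs (z - w))]
  have hd' : (G z).re - (G w).re ≤ Complex.abs (G z - G w) := by
    have h := Complex.re_le_abs (G z - G w)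
    simpa [Complex.sub_re] using h
  rw [div_mul_eq_mul_div, le_div_iff₀ (by linarith : (0:ℝ) < 1 - ρ)]
  nlinarith

lemma re_intervalIntegral {f : ℝ → ℂ} {a b : ℝ} (h : IntervalIntegrable f volume a b) :
    (∫ t in a..b, f t).re = ∫ t in a..b, (f t).re := by
  have := ContinuousLinearMap.intervalIntegral_comp_comm Complex.reCLM h
  simpa using this.symm

lemma intervalIntegrable_re {f : ℝ → ℂ} {a b : ℝ} (h : IntervalIntegrable f volume a b) :
    IntervalIntegrable (fun t => (f t).re) volume a b :=
  ⟨Complex.reCLM.integrable_comp h.1, Complex.reCLM.integrable_comp h.2⟩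

lemma EvolutionFamilyRHP.re_mono (E : EvolutionFamilyRHP) {s u t : ℝ}
    (hs : 0 ≤ s) (hsu : s ≤ u) (hut : u ≤ t) {w' : ℂ} (hw' : w' ∈ RHP) :
    (E.φ s u w').re ≤ (E.φ s t w').re := by
  have hu : 0 ≤ u := hs.trans hsu
  have hv : E.φ s u w' ∈ RHP := E.mapsTo hs hsu hw'
  rw [E.comp hs hsu hut w' hw']
  set v := E.φ s u w' with hvdef
  rw [E.integral_eq hu hut v hv, Complex.add_re]
  have hnn : 0 ≤ (∫ ξ in u..t, E.F (E.φ u ξ v) ξ).re := by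
    by_cases hint : IntervalIntegrable (fun ξ => E.F (E.φ u ξ v) ξ) volume u t
    · rw [re_intervalIntegral hint]
      apply intervalIntegral.integral_nonneg hut
      intro ξ hξ
      exact E.F_re_nonneg _ (E.mapsTo hu hξ.1 hv) ξ (hu.trans hξ.1)
    · rw [intervalIntegral.integral_undef hint]
      simp
  linarith

lemma exists_tail_small {g : ℝ → ℝ} (hg : IntegrableOn g (Ici 0) volume)
    (hnn : ∀ t, 0 ≤ g t) (s ε : ℝ) (hε : 0 < ε) :
    ∃ s₀ : ℝ, s ≤ s₀ ∧ 0 ≤ s₀ ∧ ∫ t in Ioi s₀, g t ≤ ε := by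
  have hg' : IntegrableOn g (Ioi 0) volume := hg.mono_set Ioi_subset_Ici_self
  have htd := MeasureTheory.intervalIntegral_tendsto_integral_Ioi 0 hg'
    (tendsto_id (α := ℝ) (x := atTop))
  have h0 : Tendsto (fun b => (∫ t in Ioi (0:ℝ), g t) - ∫ t in (0:ℝ)..b, g t) atTop (𝓝 0) := by
    have := (tendsto_const_nhds (x := ∫ t in Ioi (0:ℝ), g t) (f := atTop)).sub htd
    simpa using this
  have hev : ∀ᶠ b in atTop, (∫ t in Ioi (0:ℝ), g t) - (∫ t in (0:ℝ)..b, g t) ≤ ε :=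
    h0.eventually_le_const hε
  have hev2 : ∀ᶠ b in atTop, max s 0 ≤ b := eventually_ge_atTop _
  obtain ⟨b, hb1, hb2⟩ := (hev.and hev2).exists
  refine ⟨b, le_trans (le_max_left s 0) hb2, le_trans (le_max_right s 0) hb2, ?_⟩
  have hb0 : (0:ℝ) ≤ b := le_trans (le_max_right s 0) hb2
  have hsplit : ∫ t in Ioi (0:ℝ), g t
      = (∫ t in Ioc (0:ℝ) b, g t) + ∫ t in Ioi b, g t := by
    rw [← MeasureTheory.setIntegral_union (Set.Ioc_disjoint_Ioi le_rfl) measurableSet_Ioi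
      (hg'.mono_set Ioc_subset_Ioi_self) (hg'.mono_set (Ioi_subset_Ioi hb0)),
      Set.Ioc_union_Ioi_eq_Ioi hb0]
  rw [intervalIntegral.integral_of_le hb0] at hb1
  linarith

/-- The orbit of the base point `w` stays in the half-disc of radius `Re w / 2` around `w`
after a time `s₀` beyond which the tail integral is at most `Re w / 6`. -/
lemma orbit_stays_close (E : EvolutionFamilyRHP) {w : ℂ} (hw : w ∈ RHP)
    (hgint : IntegrableOn (fun t => Complex.abs (E.F w t)) (Ici 0) volume)
    {s₀ : ℝ} (hs₀ : 0 ≤ s₀)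
    (htail : ∫ t in Ioi s₀, Complex.abs (E.F w t) ≤ w.re / 6)
    {ξ : ℝ} (hξ : s₀ ≤ ξ) :
    Complex.abs (E.φ s₀ ξ w - w) ≤ w.re / 2 := by
  have hwre : 0 < w.re := hw
  set g : ℝ → ℝ := fun t => Complex.abs (E.F w t) with hgdef
  set f : ℝ → ℂ := fun η => E.F (E.φ s₀ η w) η with hfdef
  by_cases hint : IntervalIntegrable f volume s₀ ξ
  swap
  · rw [E.integral_eq hs₀ hξ w hw, intervalIntegral.integral_undef hint]
    simp only [add_zero, sub_self, map_zero]
    linarith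
  -- the orbit bound at "good" times
  have hfb : ∀ η, s₀ ≤ η → Complex.abs (E.φ s₀ η w - w) ≤ w.re / 2 →
      Complex.abs (f η) ≤ 2 * g η := by
    intro η hη hclose
    have hη0 : 0 ≤ η := hs₀.trans hη
    have hz : E.φ s₀ η w ∈ RHP := E.mapsTo hs₀ hη hw
    have hrem : w.re ≤ (E.φ s₀ η w).re := by
      have h := E.re_mono hs₀ le_rfl hη hw
      rwa [E.id_eq hs₀ w hw] at h
    have h2 := herglotz_close (E.F_holo η hη0)
      (fun u hu => E.F_re_nonneg u hu η hη0) hz hw hrem hclose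
    have h3 : (E.F w η).re ≤ g η := Complex.re_le_abs _
    have h4 : Complex.abs (f η) ≤ Complex.abs (E.F w η) + Complex.abs (f η - E.F w η) := by
      have := Complex.abs.add_le (E.F w η) (f η - E.F w η)
      simpa using this
    have h5 : 0 ≤ (E.F w η).re := E.F_re_nonneg w hw η hη0
    simp only [hfdef, hgdef] at *
    linarith
  -- set up the primitive
  set Φ : ℝ → ℂ := fun η => ∫ t in s₀..η, f t with hΦdef
  have hIcc : IntegrableOn f (Icc s₀ ξ) volume :=
    (intervalIntegrable_iff_integrableOn_Icc_of_le hξ).1 hint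
  have hcont : ContinuousOn Φ (Icc s₀ ξ) := by
    have h := intervalIntegral.continuousOn_primitive_interval
      (f := f) (a := s₀) (b := ξ) (μ := volume) (by rwa [uIcc_of_le hξ])
    rwa [uIcc_of_le hξ] at h
  have hφeq : ∀ η, s₀ ≤ η → η ≤ ξ → E.φ s₀ η w - w = Φ η := by
    intro η h1 h2
    rw [E.integral_eq hs₀ h1 w hw]
    simp [hΦdef, hfdef]
  -- main claim by continuity bootstrap
  have main : ∀ η ∈ Icc s₀ ξ, Complex.abs (Φ η) ≤ w.re / 2 := by
    by_contra hbadne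
    push_neg at hbadne
    obtain ⟨η₀, hη₀, hη₀bad⟩ := hbadne
    set Bad := {η : ℝ | η ∈ Icc s₀ ξ ∧ w.re / 2 < Complex.abs (Φ η)} with hBad
    have hBadne : Bad.Nonempty := ⟨η₀, hη₀, hη₀bad⟩
    have hBdd : BddBelow Bad := ⟨s₀, fun x hx => hx.1.1⟩
    set m := sInf Bad with hm
    have hmcl : m ∈ closure Bad := csInf_mem_closure hBadne hBdd
    have hclosed : IsClosed {η : ℝ | η ∈ Icc s₀ ξ ∧ w.re / 2 ≤ Complex.abs (Φ η)} := by
      have hca : ContinuousOn (fun η => Complex.abs (Φ η)) (Icc s₀ ξ) :=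
        Complex.continuous_abs.comp_continuousOn hcont
      have hset : {η : ℝ | η ∈ Icc s₀ ξ ∧ w.re / 2 ≤ Complex.abs (Φ η)}
          = Icc s₀ ξ ∩ (fun η => Complex.abs (Φ η)) ⁻¹' (Ici (w.re / 2)) := rfl
      rw [hset]
      exact hca.preimage_isClosed_of_isClosed isClosed_Icc isClosed_Ici
    have hmmem : m ∈ Icc s₀ ξ ∧ w.re / 2 ≤ Complex.abs (Φ m) := by
      have hsub : Bad ⊆ {η : ℝ | η ∈ Icc s₀ ξ ∧ w.re / 2 ≤ Complex.abs (Φ η)} :=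
        fun x hx => ⟨hx.1, hx.2.le⟩
      exact hclosed.closure_subset ((closure_mono hsub) hmcl)
    have hs₀m : s₀ ≤ m := hmmem.1.1
    have hmξ : m ≤ ξ := hmmem.1.2
    have hgood : ∀ η, s₀ ≤ η → η < m → Complex.abs (Φ η) ≤ w.re / 2 := by
      intro η h1 h2
      have hnb : η ∉ Bad := notMem_of_lt_csInf h2 hBdd
      by_contra hc
      push_neg at hc
      exact hnb ⟨⟨h1, h2.le.trans hmξ⟩, hc⟩
    -- integral bound at m
    have hintm : IntervalIntegrable f volume s₀ m :=
      hint.mono_set (by rw [uIcc_of_le hξ, uIcc_of_le hs₀m]; exact Icc_subset_Icc le_rfl hmξ)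
    have hgm : IntervalIntegrable g volume s₀ m := by
      refine (intervalIntegrable_iff_integrableOn_Icc_of_le hs₀m).2 ?_
      exact hgint.mono_set (fun x hx => hs₀.trans hx.1)
    have hae : ∀ᵐ η ∂(volume.restrict (Icc s₀ m)), ‖f η‖ ≤ 2 * g η := by
      have h1 : ∀ᵐ η ∂(volume.restrict (Icc s₀ m)), η ∈ Icc s₀ m :=
        ae_restrict_mem measurableSet_Icc
      have h2 : ∀ᵐ η ∂(volume.restrict (Icc s₀ m)), η ≠ m := by
        refine ae_restrict_of_ae ?_
        rw [MeasureTheory.ae_iff]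
        have : {η : ℝ | ¬η ≠ m} = {m} := by ext x; simp
        rw [this]
        exact Real.volume_singleton
      filter_upwards [h1, h2] with η hη hnem
      have hlt : η < m := lt_of_le_of_ne hη.2 hnem
      have hcl : Complex.abs (E.φ s₀ η w - w) ≤ w.re / 2 := by
        rw [hφeq η hη.1 (hlt.le.trans hmξ)]
        exact hgood η hη.1 hlt
      simpa [Complex.norm_eq_abs] using hfb η hη.1 hcl
    have hb1 : Complex.abs (Φ m) ≤ ∫ t in s₀..m, 2 * g t := by
      calc Complex.abs (Φ m) = ‖Φ m‖ := (Complex.norm_eq_abs _).symm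
        _ ≤ ∫ t in s₀..m, ‖f t‖ :=
            intervalIntegral.norm_integral_le_integral_norm hs₀m
        _ ≤ ∫ t in s₀..m, 2 * g t :=
            intervalIntegral.integral_mono_ae_restrict hs₀m hintm.norm
              (hgm.const_mul 2) hae
    have hb2 : ∫ t in s₀..m, 2 * g t ≤ 2 * (w.re / 6) := by
      rw [intervalIntegral.integral_const_mul]
      have hmono : ∫ t in s₀..m, g t ≤ ∫ t in Ioi s₀, g t := by
        rw [intervalIntegral.integral_of_le hs₀m]
        refine MeasureTheory.setIntegral_mono_set
          (hgint.mono_set (fun x hx => hs₀.trans hx.le))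
          (Filter.Eventually.of_forall fun t => Complex.abs.nonneg _)
          (Ioc_subset_Ioi_self).eventuallyLE
      nlinarith [htail]
    linarith [hmmem.2]
  have hfin := main ξ ⟨hξ, le_rfl⟩
  rw [hφeq ξ hξ le_rfl]
  linarith

/-- If the associated Herglotz vector field `F` of an evolution family in `ℍ` with common
Denjoy-Wolff point `∞` satisfies `F(w,·) ∈ L¹([0,∞))` for some `w ∈ ℍ`, then all the orbits
have bounded real part: `sup_{t ≥ s} Re φ_{s,t}(w') < ∞` for every `s ≥ 0` and `w' ∈ ℍ`;
in particular no orbit satisfies `Re φ_{s,t}(w') → +∞`. -/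
theorem evolutionFamilyRHP_bounded_of_integrable (E : EvolutionFamilyRHP)
    (h : ∃ w ∈ RHP, MeasureTheory.IntegrableOn (fun t => E.F w t) (Set.Ici (0:ℝ))) :
    ∀ s : ℝ, 0 ≤ s → ∀ w' ∈ RHP,
      (∃ M : ℝ, ∀ t : ℝ, s ≤ t → (E.φ s t w').re ≤ M) ∧
      ¬ Tendsto (fun t => (E.φ s t w').re) atTop atTop := by
  obtain ⟨w, hw, hFint⟩ := h
  intro s hs w' hw'
  have hwre : 0 < w.re := hw
  set g : ℝ → ℝ := fun t => Complex.abs (E.F w t) with hgdef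
  have hgint : IntegrableOn g (Ici 0) volume := by
    have hn := hFint.norm
    exact hn
  obtain ⟨s₀, hss₀, hs₀0, htail⟩ := exists_tail_small hgint
    (fun t => Complex.abs.nonneg _) s (w.re / 6) (by linarith)
  set w'' := E.φ s s₀ w' with hw''def
  have hw'' : w'' ∈ RHP := E.mapsTo hs hss₀ hw'
  set ρ := Complex.abs (w'' - w) / Complex.abs (w'' + conj w) with hρdef
  have hρ1 : ρ < 1 := (div_lt_one (abs_add_pos hw'' hw)).2 (abs_sub_lt_abs_add hw'' hw)
  have hρ0 : 0 ≤ ρ := div_nonneg (Complex.abs.nonneg _) (Complex.abs.nonneg _)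
  set K : ℝ := (1 + ρ) / (1 - ρ) * 2 with hKdef
  have hK0 : 0 ≤ K :=
    mul_nonneg (div_nonneg (by linarith) (by linarith)) (by norm_num)
  have claim2 : ∀ ξ : ℝ, s₀ ≤ ξ → (E.F (E.φ s₀ ξ w'') ξ).re ≤ K * g ξ := by
    intro ξ hξ
    have hξ0 : 0 ≤ ξ := hs₀0.trans hξ
    have hz : E.φ s₀ ξ w'' ∈ RHP := E.mapsTo hs₀0 hξ hw''
    have hwξ : E.φ s₀ ξ w ∈ RHP := E.mapsTo hs₀0 hξ hw
    have hsp := schwarzPick (E.holo hs₀0 hξ) (E.mapsTo hs₀0 hξ) hw'' hw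
    have hcontr : Complex.abs (E.φ s₀ ξ w'' - E.φ s₀ ξ w)
        ≤ ρ * Complex.abs (E.φ s₀ ξ w'' + conj (E.φ s₀ ξ w)) := by
      rw [hρdef, div_mul_eq_mul_div, le_div_iff₀ (abs_add_pos hw'' hw)]
      nlinarith [hsp]
    have h1 := herglotz_re_le (E.F_holo ξ hξ0) (fun u hu => E.F_re_nonneg u hu ξ hξ0)
      hz hwξ hρ1 hcontr
    have hclose := orbit_stays_close E hw hgint hs₀0 htail hξ
    have hrem : w.re ≤ (E.φ s₀ ξ w).re := by
      have hmm := E.re_mono hs₀0 le_rfl hξ hw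
      rwa [E.id_eq hs₀0 w hw] at hmm
    have h2 := herglotz_close (E.F_holo ξ hξ0) (fun u hu => E.F_re_nonneg u hu ξ hξ0)
      hwξ hw hrem hclose
    have h3 : (E.F w ξ).re ≤ g ξ := Complex.re_le_abs _
    have h4 : (E.F (E.φ s₀ ξ w) ξ).re ≤ 2 * g ξ := by
      have h5 := Complex.re_le_abs (E.F (E.φ s₀ ξ w) ξ - E.F w ξ)
      rw [Complex.sub_re] at h5
      have h6 : 0 ≤ g ξ := Complex.abs.nonneg _
      have h7 : 0 ≤ (E.F w ξ).re := E.F_re_nonneg w hw ξ hξ0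
      linarith
    calc (E.F (E.φ s₀ ξ w'') ξ).re ≤ (1 + ρ) / (1 - ρ) * (E.F (E.φ s₀ ξ w) ξ).re := h1
      _ ≤ (1 + ρ) / (1 - ρ) * (2 * g ξ) :=
          mul_le_mul_of_nonneg_left h4 (div_nonneg (by linarith) (by linarith))
      _ = K * g ξ := by rw [hKdef]; ring
  have hM : ∀ t : ℝ, s ≤ t → (E.φ s t w').re ≤ w''.re + K * (w.re / 6) := by
    intro t ht
    have hKw : 0 ≤ K * (w.re / 6) := mul_nonneg hK0 (by linarith)
    by_cases hts₀ : t ≤ s₀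
    · have hmono := E.re_mono hs ht hts₀ hw'
      rw [← hw''def] at hmono
      linarith
    · push_neg at hts₀
      have hts₀' : s₀ ≤ t := hts₀.le
      rw [E.comp hs hss₀ hts₀' w' hw', ← hw''def,
        E.integral_eq hs₀0 hts₀' w'' hw'', Complex.add_re]
      by_cases hint : IntervalIntegrable (fun ξ => E.F (E.φ s₀ ξ w'') ξ) volume s₀ t
      · rw [re_intervalIntegral hint]
        have hKg : IntervalIntegrable (fun ξ => K * g ξ) volume s₀ t :=
          ((intervalIntegrable_iff_integrableOn_Icc_of_le hts₀').2
            (hgint.mono_set (fun x hx => hs₀0.trans hx.1))).const_mul K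
        have hle : (∫ ξ in s₀..t, (E.F (E.φ s₀ ξ w'') ξ).re) ≤ ∫ ξ in s₀..t, K * g ξ :=
          intervalIntegral.integral_mono_on hts₀' (intervalIntegrable_re hint) hKg
            (fun ξ hξ => claim2 ξ hξ.1)
        have hle2 : (∫ ξ in s₀..t, K * g ξ) ≤ K * (w.re / 6) := by
          rw [intervalIntegral.integral_const_mul]
          have hmono : (∫ ξ in s₀..t, g ξ) ≤ ∫ ξ in Ioi s₀, g ξ := by
            rw [intervalIntegral.integral_of_le hts₀']
            exact MeasureTheory.setIntegral_mono_set
              (hgint.mono_set (fun x hx => hs₀0.trans hx.le))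
              (Filter.Eventually.of_forall fun u => Complex.abs.nonneg _)
              (Ioc_subset_Ioi_self).eventuallyLE
          exact mul_le_mul_of_nonneg_left (hmono.trans htail) hK0
        linarith
      · rw [intervalIntegral.integral_undef hint]
        simpa using hKw
  refine ⟨⟨w''.re + K * (w.re / 6), hM⟩, ?_⟩
  intro hT
  obtain ⟨t, ht⟩ := ((hT.eventually_ge_atTop (w''.re + K * (w.re / 6) + 1)).and
    (eventually_ge_atTop s)).exists
  have hMt := hM t ht.2
  have ht1 := ht.1
  linarith
end

section
/- Let (ψ_{s,t}) be a non-trivial evolution family in 𝔻 with common Denjoy–Wolff point 0, and let λ : [0,∞) → ℂ be an associated spectral function, i.e. λ is locally absolutely continuous, λ(0) = 0, Re λ(t) ≥ 0 for all t, t ↦ Re λ(t) is nondecreasing, and ψ_{s,t}'(0) = exp(λ(s) − λ(t)) for all 0 ≤ s ≤ t (derivative at 0). Set L := lim_{t→+∞} Re λ(t) ∈ [0, +∞]. Then the following are equivalent: (a) L = +∞; (b) for every s ≥ 0, ψ_{s,t} → 0 uniformly on compact subsets of 𝔻 as t → +∞; (c) there exists s ≥ 0 such that ψ_{s,t} → 0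 uniformly on compact subsets of 𝔻 as t → +∞. -/
open Complex MeasureTheory Set Filter Topology

/-- The open unit disk `𝔻`. -/
def UD : Set ℂ := {z : ℂ | ‖z‖ < 1}

/-- An evolution family in the unit disk with common Denjoy-Wolff point `0`, i.e. a
solution family of the radial Loewner-type equation `dz/dt = −z·p(z,t)` with `p` a
generalized Herglotz function. -/
structure EvolutionFamilyDisk0 where
  φ : ℝ → ℝ → ℂ → ℂ
  p : ℂ → ℝ → ℂ
  mapsTo : ∀ ⦃s t : ℝ⦄, 0 ≤ s → s ≤ t → Set.MapsTo (φ s t) UD UD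
  holo : ∀ ⦃s t : ℝ⦄, 0 ≤ s → s ≤ t → DifferentiableOn ℂ (φ s t) UD
  id_eq : ∀ ⦃s : ℝ⦄, 0 ≤ s → ∀ z ∈ UD, φ s s z = z
  comp : ∀ ⦃s u t : ℝ⦄, 0 ≤ s → s ≤ u → u ≤ t → ∀ z ∈ UD,
    φ s t z = φ u t (φ s u z)
  p_meas : ∀ z ∈ UD, Measurable (p z)
  p_holo : ∀ t : ℝ, 0 ≤ t → DifferentiableOn ℂ (fun z => p z t) UD
  p_re_nonneg : ∀ z ∈ UD, ∀ t : ℝ, 0 ≤ t → 0 ≤ (p z t).re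
  G_bound : ∀ K : Set ℂ, K ⊆ UD → IsCompact K → ∀ T : ℝ, 0 < T →
    ∃ k : ℝ → ℝ, (∀ t, 0 ≤ k t) ∧ MeasureTheory.IntegrableOn k (Set.Icc 0 T) ∧
      ∀ z ∈ K, ∀ᵐ t ∂(MeasureTheory.volume.restrict (Set.Icc (0:ℝ) T)),
        ‖z * p z t‖ ≤ k t
  integral_eq : ∀ ⦃s t : ℝ⦄, 0 ≤ s → s ≤ t → ∀ z ∈ UD,
    φ s t z = z - ∫ ξ in s..t, φ s ξ z * p (φ s ξ z) ξ

/-- The family is non-trivial if some `φ_{s,t}`, `s < t`, is not the identity of `𝔻`. -/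
def EvolutionFamilyDisk0.Nontrivial (E : EvolutionFamilyDisk0) : Prop :=
  ∃ s t : ℝ, 0 ≤ s ∧ s < t ∧ ∃ z ∈ UD, E.φ s t z ≠ z

/-- The ω-limit (in `ℂ`) of the trajectory `t ↦ ψ_{s,t}(z)`. -/
def omegaLimitDisk0 (E : EvolutionFamilyDisk0) (s : ℝ) (z : ℂ) : Set ℂ :=
  {q : ℂ | ∃ tn : ℕ → ℝ, Tendsto tn atTop atTop ∧
    Tendsto (fun n => E.φ s (tn n) z) atTop (𝓝 q)}
set_option maxHeartbeats 1000000

lemma norm_dslope_le_of_bdd {f : ℂ → ℂ} (hd : DifferentiableOn ℂ f (Metric.ball 0 1))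
    {C : ℝ} (hb : ∀ z ∈ Metric.ball (0:ℂ) 1, ‖f z - f 0‖ ≤ C)
    {w : ℂ} (hw : w ∈ Metric.ball (0:ℂ) 1) : ‖dslope f 0 w‖ ≤ C := by
  refine le_of_forall_pos_le_add fun ε hε => ?_
  have h_maps : Set.MapsTo f (Metric.ball 0 1) (Metric.ball (f 0) (C + ε)) := fun z hz => by
    have := hb z hz
    simp only [Metric.mem_ball, dist_eq_norm]
    linarith
  simpa using Complex.norm_dslope_le_div_of_mapsTo_ball hd (h_maps.mono_right Metric.ball_subset_closedBall) hw

lemma norm_eq_norm_mul_dslope {f : ℂ → ℂ} (h0 : f 0 = 0) (w : ℂ) :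
    ‖f w‖ = ‖w‖ * ‖dslope f 0 w‖ := by
  have h := sub_smul_dslope f 0 w
  rw [sub_zero, h0, sub_zero] at h
  rw [← h, norm_smul]

lemma schwarz_pick_zero {f : ℂ → ℂ} (hd : DifferentiableOn ℂ f (Metric.ball 0 1))
    (h0 : f 0 = 0) (hm : Set.MapsTo f (Metric.ball 0 1) (Metric.ball 0 1))
    (hd0 : ‖deriv f 0‖ < 1) {w : ℂ} (hw : w ∈ Metric.ball (0:ℂ) 1) :
    ‖f w‖ * (1 - ‖deriv f 0‖ * ‖w‖) ≤ ‖w‖ * (‖deriv f 0‖ + ‖w‖) := by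
  set g : ℂ → ℂ := dslope f 0 with hg
  have hgd : DifferentiableOn ℂ g (Metric.ball 0 1) :=
    (differentiableOn_dslope (Metric.ball_mem_nhds 0 one_pos)).mpr hd
  have hg1 : ∀ z ∈ Metric.ball (0:ℂ) 1, ‖g z‖ ≤ 1 := by
    intro z hz
    have hb : ∀ z ∈ Metric.ball (0:ℂ) 1, ‖f z - f 0‖ ≤ 1 := fun z hz => by
      rw [h0, sub_zero]
      exact (mem_ball_zero_iff.mp (hm hz)).le
    exact norm_dslope_le_of_bdd hd hb hz
  have hga : g 0 = deriv f 0 := dslope_same f 0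
  set a : ℂ := deriv f 0 with ha
  have ha1 : ‖a‖ < 1 := hd0
  set F : ℂ → ℂ := fun z => (g z - a) / (1 - (starRingEnd ℂ) a * g z) with hF
  have hden : ∀ z ∈ Metric.ball (0:ℂ) 1, (1 : ℂ) - (starRingEnd ℂ) a * g z ≠ 0 := by
    intro z hz heq
    have h1 : (1 : ℂ) = (starRingEnd ℂ) a * g z := sub_eq_zero.mp heq
    have h2 : (1:ℝ) = ‖a‖ * ‖g z‖ := by
      calc (1:ℝ) = ‖(1:ℂ)‖ := by simp
      _ = ‖(starRingEnd ℂ) a * g z‖ := by rw [← h1]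
      _ = ‖a‖ * ‖g z‖ := by rw [norm_mul, RCLike.norm_conj]
    nlinarith [norm_nonneg a, hg1 z hz, norm_nonneg (g z)]
  have hsq : ∀ x : ℂ, ‖x‖^2 = Complex.normSq x := fun x => by
    rw [Complex.sq_norm]
  have hFb : ∀ z ∈ Metric.ball (0:ℂ) 1, ‖F z‖ ≤ 1 := by
    intro z hz
    have hnum : ‖g z - a‖ ≤ ‖(1:ℂ) - (starRingEnd ℂ) a * g z‖ := by
      have key : ‖(1:ℂ) - (starRingEnd ℂ) a * g z‖^2 - ‖g z - a‖^2
          = (1 - ‖a‖^2) * (1 - ‖g z‖^2) := by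
        rw [hsq, hsq, hsq, hsq]
        simp only [Complex.normSq_apply, Complex.sub_re, Complex.sub_im, Complex.mul_re,
          Complex.mul_im, Complex.one_re, Complex.one_im, Complex.conj_re, Complex.conj_im]
        ring
      have e1 : ‖a‖^2 ≤ 1 := by nlinarith [norm_nonneg a]
      have e2 : ‖g z‖^2 ≤ 1 := by nlinarith [hg1 z hz, norm_nonneg (g z)]
      have e3 : ‖g z - a‖^2 ≤ ‖(1:ℂ) - (starRingEnd ℂ) a * g z‖^2 := by nlinarith
      exact (pow_le_pow_iff_left₀ (norm_nonneg _) (norm_nonneg _) (by norm_num)).mp e3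
    rw [hF]
    simp only [norm_div]
    rw [div_le_one (lt_of_le_of_ne (norm_nonneg _) (Ne.symm (norm_ne_zero_iff.mpr (hden z hz))))]
    exact hnum
  have hFd : DifferentiableOn ℂ F (Metric.ball 0 1) := by
    apply DifferentiableOn.div (hgd.sub (differentiableOn_const a))
      ((differentiableOn_const 1).sub ((differentiableOn_const _).mul hgd)) hden
  have hF0 : F 0 = 0 := by
    simp [hF, hga]
  have hFw : ‖F w‖ ≤ ‖w‖ := by
    rw [norm_eq_norm_mul_dslope hF0 w]
    have : ‖dslope F 0 w‖ ≤ 1 := by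
      apply norm_dslope_le_of_bdd hFd (fun z hz => ?_) hw
      rw [hF0, sub_zero]; exact hFb z hz
    nlinarith [norm_nonneg w]
  have hgwa : g w - a = F w * ((1:ℂ) - (starRingEnd ℂ) a * g w) := by
    simp only [hF]
    exact (div_mul_cancel₀ _ (hden w hw)).symm
  have h1 : ‖g w - a‖ ≤ ‖w‖ * (1 + ‖a‖ * ‖g w‖) := by
    rw [hgwa, norm_mul]
    have : ‖(1:ℂ) - (starRingEnd ℂ) a * g w‖ ≤ 1 + ‖a‖ * ‖g w‖ := by
      calc ‖(1:ℂ) - (starRingEnd ℂ) a * g w‖ ≤ ‖(1:ℂ)‖ + ‖(starRingEnd ℂ) a * g w‖ :=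
        norm_sub_le _ _
      _ = 1 + ‖a‖ * ‖g w‖ := by rw [norm_mul, RCLike.norm_conj, norm_one]
    have h2 := mul_le_mul hFw this (norm_nonneg _) (norm_nonneg w)
    exact h2
  have h2 : ‖g w‖ ≤ ‖a‖ + ‖g w - a‖ := by
    have := norm_sub_norm_le (g w) a
    linarith
  have h3 : ‖g w‖ * (1 - ‖a‖ * ‖w‖) ≤ ‖a‖ + ‖w‖ := by nlinarith [norm_nonneg w]
  have hfw : ‖f w‖ = ‖w‖ * ‖g w‖ := norm_eq_norm_mul_dslope h0 w
  rw [hfw]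
  nlinarith [norm_nonneg w, norm_nonneg (g w)]

lemma norm_deriv_le_of_small {f : ℂ → ℂ} (hd : DifferentiableOn ℂ f (Metric.ball 0 1))
    (h0 : f 0 = 0) (hm : Set.MapsTo f (Metric.ball 0 1) (Metric.ball 0 1))
    {ρ η : ℝ} (hρ0 : 0 < ρ) (hρ1 : ρ < 1)
    (hη : ∀ z ∈ Metric.closedBall (0:ℂ) ρ, ‖f z‖ ≤ η) :
    ‖deriv f 0‖ ≤ η / ρ + 2 * ρ := by
  set g : ℂ → ℂ := dslope f 0 with hg
  have hgd : DifferentiableOn ℂ g (Metric.ball 0 1) :=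
    (differentiableOn_dslope (Metric.ball_mem_nhds 0 one_pos)).mpr hd
  have hg1 : ∀ z ∈ Metric.ball (0:ℂ) 1, ‖g z‖ ≤ 1 := by
    intro z hz
    have hb : ∀ z ∈ Metric.ball (0:ℂ) 1, ‖f z - f 0‖ ≤ 1 := fun z hz => by
      rw [h0, sub_zero]
      exact (mem_ball_zero_iff.mp (hm hz)).le
    exact norm_dslope_le_of_bdd hd hb hz
  set w : ℂ := (ρ : ℂ) with hwdef
  have hwn : ‖w‖ = ρ := by
    simp [hwdef, Complex.norm_real, abs_of_pos hρ0]
  have hwball : w ∈ Metric.ball (0:ℂ) 1 := by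
    rw [mem_ball_zero_iff, hwn]; exact hρ1
  have h0ball : (0:ℂ) ∈ Metric.ball (0:ℂ) 1 := by simp
  have hq : ‖dslope g 0 w‖ ≤ 2 := by
    apply norm_dslope_le_of_bdd hgd (fun z hz => ?_) hwball
    calc ‖g z - g 0‖ ≤ ‖g z‖ + ‖g 0‖ := norm_sub_le _ _
    _ ≤ 2 := by linarith [hg1 z hz, hg1 0 h0ball]
  have hgd0 : ‖g w - g 0‖ ≤ 2 * ρ := by
    have h := sub_smul_dslope g 0 w
    rw [sub_zero] at h
    rw [← h, norm_smul, hwn]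
    nlinarith
  have hgw : ‖g w‖ ≤ η / ρ := by
    have hf : ‖f w‖ = ‖w‖ * ‖g w‖ := norm_eq_norm_mul_dslope h0 w
    have hfη : ‖f w‖ ≤ η := hη w (by rw [Metric.mem_closedBall, dist_zero_right, hwn])
    rw [le_div_iff₀ hρ0]
    rw [hf, hwn] at hfη
    linarith
  have hfin : ‖g 0‖ ≤ ‖g w‖ + ‖g w - g 0‖ := by
    calc ‖g 0‖ = ‖g w - (g w - g 0)‖ := by ring_nf
    _ ≤ ‖g w‖ + ‖g w - g 0‖ := norm_sub_le _ _
  have hder : deriv f 0 = g 0 := (dslope_same f 0).symm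
  rw [hder]
  linarith

lemma UD_eq : UD = Metric.ball (0:ℂ) 1 := by
  ext z
  simp [UD, Metric.mem_ball, Complex.dist_eq]

lemma EvolutionFamilyDisk0.ae_lipschitz (E : EvolutionFamilyDisk0) {T : ℝ} (hT : 0 < T) :
    ∃ k : ℝ → ℝ, (∀ ξ, 0 ≤ k ξ) ∧ MeasureTheory.IntegrableOn k (Set.Icc 0 T) ∧
      ∀ᵐ ξ ∂(volume.restrict (Set.Icc (0:ℝ) T)),
        ∀ w ∈ Metric.closedBall (0:ℂ) (1/4), ‖w * E.p w ξ‖ ≤ k ξ * ‖w‖ := by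
  have hKU : Metric.closedBall (0:ℂ) (1/2) ⊆ UD := by
    rw [UD_eq]
    intro z hz
    rw [Metric.mem_closedBall] at hz
    rw [Metric.mem_ball]
    linarith
  have hKc : IsCompact (Metric.closedBall (0:ℂ) (1/2)) := isCompact_closedBall _ _
  obtain ⟨k, hk0, hkint, hkb⟩ := E.G_bound (Metric.closedBall 0 (1/2)) hKU hKc T hT
  obtain ⟨D, hDK, hDc, hDd⟩ := EMetric.subset_countable_closure_of_compact hKc
  have hae1 : ∀ᵐ ξ ∂(volume.restrict (Set.Icc (0:ℝ) T)), ∀ z ∈ D,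
      ‖z * E.p z ξ‖ ≤ k ξ := (ae_ball_iff hDc).mpr fun z hz => hkb z (hDK hz)
  have hmem : ∀ᵐ ξ ∂(volume.restrict (Set.Icc (0:ℝ) T)), ξ ∈ Set.Icc (0:ℝ) T :=
    ae_restrict_mem measurableSet_Icc
  refine ⟨fun ξ => 2 * (k ξ + 1), fun ξ => by have := hk0 ξ; positivity, ?_, ?_⟩
  · exact (hkint.add (integrableOn_const measure_Icc_lt_top.ne)).const_mul 2
  filter_upwards [hae1, hmem] with ξ h1 h2
  have hp_cont : ContinuousOn (fun z : ℂ => z * E.p z ξ) UD :=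
    continuousOn_id.mul (E.p_holo ξ h2.1).continuousOn
  have hK2 : ∀ z ∈ Metric.closedBall (0:ℂ) (1/2), ‖z * E.p z ξ‖ ≤ k ξ := by
    intro z hz
    have hzc : z ∈ closure D := hDd hz
    rw [mem_closure_iff_seq_limit] at hzc
    obtain ⟨u, huD, hu⟩ := hzc
    have huUD : ∀ n, u n ∈ UD := fun n => hKU (hDK (huD n))
    have hzUD : z ∈ UD := hKU hz
    have htend : Tendsto (fun n => ‖u n * E.p (u n) ξ‖) atTop (𝓝 ‖z * E.p z ξ‖) := by
      have hcw := (hp_cont z hzUD).tendsto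
      have hseq : Tendsto u atTop (𝓝[UD] z) :=
        tendsto_nhdsWithin_of_tendsto_nhds_of_eventually_within u hu (Eventually.of_forall huUD)
      exact (hcw.comp hseq).norm
    exact le_of_tendsto htend (Eventually.of_forall fun n => by
      simpa using h1 (u n) (huD n))
  intro w hw
  by_cases hw0 : w = 0
  · simp [hw0]
  set H : ℂ → ℂ := fun z => z * E.p z ξ with hH
  have hH0 : H 0 = 0 := by simp [hH]
  have hHd : DifferentiableOn ℂ H (Metric.ball 0 (1/2)) := by
    apply (differentiableOn_id.mul (E.p_holo ξ h2.1)).mono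
    rw [UD_eq]
    exact Metric.ball_subset_ball (by norm_num)
  have hmaps : Set.MapsTo H (Metric.ball 0 (1/2)) (Metric.ball (H 0) (k ξ + 1)) := fun z hz => by
    rw [hH0, mem_ball_zero_iff]
    have h3 := hK2 z (Metric.ball_subset_closedBall hz)
    have h4 := hk0 ξ
    calc ‖H z‖ = ‖z * E.p z ξ‖ := rfl
    _ ≤ k ξ := h3
    _ < k ξ + 1 := by linarith
  have hwb : w ∈ Metric.ball (0:ℂ) (1/2) := by
    rw [mem_ball_zero_iff]
    rw [Metric.mem_closedBall, dist_zero_right] at hw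
    linarith
  have hds : ‖dslope H 0 w‖ ≤ (k ξ + 1) / (1/2) :=
    Complex.norm_dslope_le_div_of_mapsTo_ball hHd (hmaps.mono_right Metric.ball_subset_closedBall) hwb
  have heq : ‖H w‖ = ‖w‖ * ‖dslope H 0 w‖ := norm_eq_norm_mul_dslope hH0 w
  have hfin : ‖H w‖ ≤ 2 * (k ξ + 1) * ‖w‖ := by
    rw [heq]
    calc ‖w‖ * ‖dslope H 0 w‖ ≤ ‖w‖ * ((k ξ + 1) / (1/2)) :=
          mul_le_mul_of_nonneg_left hds (norm_nonneg w)
    _ = 2 * (k ξ + 1) * ‖w‖ := by ring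
  exact hfin

lemma EvolutionFamilyDisk0.phi_zero_fixed (E : EvolutionFamilyDisk0) {s t : ℝ}
    (hs : 0 ≤ s) (hst : s ≤ t) : E.φ s t 0 = 0 := by
  have h0UD : (0:ℂ) ∈ UD := by simp [UD]
  obtain ⟨L, hL0, hLint, hLae⟩ := E.ae_lipschitz (T := t + 1) (by linarith)
  set F : ℝ → ℂ := fun ξ => E.φ s ξ 0 * E.p (E.φ s ξ 0) ξ with hFdef
  have hveq : ∀ τ, s ≤ τ → E.φ s τ 0 = - ∫ ξ in s..τ, F ξ := by
    intro τ hτ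
    have h := E.integral_eq hs hτ 0 h0UD
    rw [zero_sub] at h
    exact h
  have hvs : E.φ s s 0 = 0 := E.id_eq hs 0 h0UD
  -- main inductive claim
  have Q : ∀ b, s ≤ b → b ≤ t → IntervalIntegrable F volume s b →
      ∀ σ ∈ Icc s b, E.φ s σ 0 = 0 := by
    intro b hsb hbt hFint
    have hFIcc : IntegrableOn F (Icc s b) volume :=
      (intervalIntegrable_iff_integrableOn_Icc_of_le hsb).mp hFint
    have hvcont : ContinuousOn (fun τ => E.φ s τ 0) (Icc s b) := by
      have h1 : ContinuousOn (fun τ => ∫ ξ in s..τ, F ξ) (Set.uIcc s b) :=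
        intervalIntegral.continuousOn_primitive_interval (by rwa [uIcc_of_le hsb])
      rw [uIcc_of_le hsb] at h1
      exact h1.neg.congr fun τ hτ => hveq τ hτ.1
    have hsub0 : Icc s b ⊆ Icc 0 (t+1) := Icc_subset_Icc hs (by linarith)
    set B : Set ℝ := {τ | τ ∈ Icc s b ∧ ∀ σ ∈ Icc s τ, ‖E.φ s σ 0‖ ≤ 1/4} with hBdef
    have hsB : s ∈ B := ⟨⟨le_rfl, hsb⟩, fun σ hσ => by
      have hσs : σ = s := le_antisymm hσ.2 hσ.1
      rw [hσs, hvs]; norm_num⟩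
    have hBb : BddAbove B := ⟨b, fun τ hτ => hτ.1.2⟩
    set c : ℝ := sSup B with hcdef
    have hsc : s ≤ c := le_csSup hBb hsB
    have hcb : c ≤ b := csSup_le ⟨s, hsB⟩ fun τ hτ => hτ.1.2
    have hIco : ∀ σ ∈ Ico s c, ‖E.φ s σ 0‖ ≤ 1/4 := by
      intro σ hσ
      obtain ⟨τ, hτB, hστ⟩ := exists_lt_of_lt_csSup ⟨s, hsB⟩ hσ.2
      exact hτB.2 σ ⟨hσ.1, hστ.le⟩
    have hIcc14 : ∀ σ ∈ Icc s c, ‖E.φ s σ 0‖ ≤ 1/4 := by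
      intro σ hσ
      rcases lt_or_eq_of_le hσ.2 with h | h
      · exact hIco σ ⟨hσ.1, h⟩
      rcases eq_or_lt_of_le hsc with h2 | h2
      · rw [h, ← h2, hvs]; norm_num
      have hcw : ContinuousWithinAt (fun τ => E.φ s τ 0) (Icc s b) c := hvcont c ⟨hsc, hcb⟩
      have hne : (𝓝[Ico s c] c).NeBot := by
        apply mem_closure_iff_nhdsWithin_neBot.mp
        rw [closure_Ico (ne_of_lt h2)]
        exact ⟨hsc, le_rfl⟩
      have ht2 : Tendsto (fun τ => ‖E.φ s τ 0‖) (𝓝[Ico s c] c) (𝓝 ‖E.φ s c 0‖) :=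
        ((hcw.mono (Ico_subset_Icc_self.trans (Icc_subset_Icc_right hcb))).tendsto).norm
      rw [h]
      exact le_of_tendsto ht2 (eventually_mem_nhdsWithin.mono fun τ hτ => hIco τ hτ)
    have hLsb : IntervalIntegrable L volume s b := by
      rw [intervalIntegrable_iff_integrableOn_Icc_of_le hsb]
      exact hLint.mono_set hsub0
    set G : ℝ → ℝ := fun τ => ∫ ξ in s..τ, L ξ with hGdef
    have hGc : ContinuousOn G (Icc s b) := by
      have h1 : ContinuousOn (fun τ => ∫ ξ in s..τ, L ξ) (Set.uIcc s b) :=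
        intervalIntegral.continuousOn_primitive_interval
          (by rw [uIcc_of_le hsb]; exact hLint.mono_set hsub0)
      rwa [uIcc_of_le hsb] at h1
    have hGu : UniformContinuousOn G (Icc s b) :=
      isCompact_Icc.uniformContinuousOn_of_continuous hGc
    obtain ⟨δ, hδ0, hδ⟩ := Metric.uniformContinuousOn_iff.mp hGu (1/2) (by norm_num)
    have key : ∀ n : ℕ, ∀ σ ∈ Icc s (min (s + n * (δ/2)) c), E.φ s σ 0 = 0 := by
      intro n
      induction n with
      | zero =>
        intro σ hσ
        have h1 : min (s + (0:ℕ) * (δ/2)) c = s := by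
          have h2 : s + ((0:ℕ):ℝ) * (δ/2) = s := by push_cast; ring
          rw [h2, min_eq_left hsc]
        rw [h1] at hσ
        have hσs : σ = s := le_antisymm hσ.2 hσ.1
        rw [hσs]; exact hvs
      | succ n ih =>
        intro σ hσ
        set a1 : ℝ := min (s + n * (δ/2)) c with ha1
        set a2 : ℝ := min (s + (n+1) * (δ/2)) c with ha2
        have hsa1 : s ≤ a1 := by
          apply le_min _ hsc
          have : (0:ℝ) ≤ (n:ℝ) * (δ/2) := mul_nonneg (Nat.cast_nonneg n) (by linarith)
          linarith
        have ha12 : a1 ≤ a2 := by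
          apply min_le_min _ le_rfl
          have : ((n:ℝ)) * (δ/2) ≤ ((n:ℝ)+1) * (δ/2) := by nlinarith
          push_cast
          linarith
        have ha2c : a2 ≤ c := min_le_right _ _
        have ha1c : a1 ≤ c := min_le_right _ _
        have ha1b : a1 ≤ b := ha1c.trans hcb
        have hgap : a2 - a1 ≤ δ/2 := by
          rcases le_total (s + (n:ℝ) * (δ/2)) c with h | h
          · have e1 : a1 = s + (n:ℝ) * (δ/2) := min_eq_left h
            have e2 : a2 ≤ s + ((n:ℝ)+1) * (δ/2) := by
              refine le_trans (min_le_left _ _) ?_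
              push_cast
              linarith
            rw [e1]
            nlinarith
          · have e1 : a1 = c := min_eq_right h
            linarith [ha2c, hδ0]
        by_cases hσ1 : σ ≤ a1
        · exact ih σ ⟨hσ.1, hσ1⟩
        push_neg at hσ1
        have hσ2 : σ ≤ a2 := by
          have h5 := hσ.2
          rw [ha2]
          push_cast at h5 ⊢
          exact h5
        have hsubb : Icc a1 a2 ⊆ Icc s b := Icc_subset_Icc hsa1 (ha2c.trans hcb)
        obtain ⟨σm, hσmem, hσmax⟩ := isCompact_Icc.exists_isMaxOn ⟨σ, hσ1.le, hσ2⟩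
          ((hvcont.mono hsubb).norm)
        have hM0 : (0:ℝ) ≤ ‖E.φ s σm 0‖ := norm_nonneg _
        have hFsub : ∀ x y, s ≤ x → x ≤ y → y ≤ b → IntervalIntegrable F volume x y := by
          intro x y hx hxy hyb
          apply hFint.mono_set
          rw [uIcc_of_le hxy, uIcc_of_le hsb]
          exact Icc_subset_Icc hx hyb
        have hIoc : ∀ τ ∈ Ioc a1 a2, ‖E.φ s τ 0‖ ≤ (1/2) * ‖E.φ s σm 0‖ := by
          intro τ hτ
          have hτb : τ ≤ b := hτ.2.trans (ha2c.trans hcb)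
          have hvτ : E.φ s τ 0 = - ∫ ξ in a1..τ, F ξ := by
            have e1 := hveq τ (hsa1.trans hτ.1.le)
            have e2 : (∫ ξ in s..a1, F ξ) + ∫ ξ in a1..τ, F ξ = ∫ ξ in s..τ, F ξ :=
              intervalIntegral.integral_add_adjacent_intervals
                (hFsub s a1 le_rfl hsa1 ha1b) (hFsub a1 τ hsa1 hτ.1.le hτb)
            have e3 : ∫ ξ in s..a1, F ξ = 0 := by
              have heqon : EqOn F 0 (Set.uIcc s a1) := by
                intro ξ hξ
                rw [uIcc_of_le hsa1] at hξ
                have hz := ih ξ hξ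
                show E.φ s ξ 0 * E.p (E.φ s ξ 0) ξ = 0
                rw [hz, zero_mul]
              rw [intervalIntegral.integral_congr heqon]
              simp
            rw [e1, ← e2, e3, zero_add]
          have haeτ : ∀ᵐ ξ ∂(volume.restrict (Set.uIoc a1 τ)), ‖F ξ‖ ≤ L ξ * ‖E.φ s σm 0‖ := by
            have hsub2 : Set.uIoc a1 τ ⊆ Icc 0 (t+1) := by
              rw [uIoc_of_le hτ.1.le]
              intro x hx
              exact ⟨by linarith [hx.1, hsa1, hs], by linarith [hx.2, hτb, hbt]⟩
            have hmem2 : ∀ᵐ ξ ∂(volume.restrict (Set.uIoc a1 τ)), ξ ∈ Set.uIoc a1 τ :=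
              ae_restrict_mem measurableSet_uIoc
            filter_upwards [ae_restrict_of_ae_restrict_of_subset hsub2 hLae, hmem2]
              with ξ hξL hξm
            rw [uIoc_of_le hτ.1.le] at hξm
            have hξc : ξ ∈ Icc s c :=
              ⟨hsa1.trans hξm.1.le, hξm.2.trans (hτ.2.trans ha2c)⟩
            have h14 : ‖E.φ s ξ 0‖ ≤ 1/4 := hIcc14 ξ hξc
            have hwcb : E.φ s ξ 0 ∈ Metric.closedBall (0:ℂ) (1/4) := by
              rw [Metric.mem_closedBall, dist_zero_right]; exact h14
            have hb1 : ‖F ξ‖ ≤ L ξ * ‖E.φ s ξ 0‖ := hξL _ hwcb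
            have hb2 : ‖E.φ s ξ 0‖ ≤ ‖E.φ s σm 0‖ := hσmax ⟨hξm.1.le, hξm.2.trans hτ.2⟩
            exact hb1.trans (mul_le_mul_of_nonneg_left hb2 (hL0 ξ))
          have hLτ : IntervalIntegrable (fun ξ => L ξ * ‖E.φ s σm 0‖) volume a1 τ := by
            apply IntervalIntegrable.mul_const
            apply hLsb.mono_set
            rw [uIcc_of_le hτ.1.le, uIcc_of_le hsb]
            exact Icc_subset_Icc hsa1 hτb
          have hni := intervalIntegral.norm_integral_le_abs_of_norm_le haeτ hLτ
          rw [hvτ, norm_neg]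
          refine hni.trans ?_
          rw [intervalIntegral.integral_mul_const]
          have hLi1 : IntervalIntegrable L volume s τ := by
            apply hLsb.mono_set
            rw [uIcc_of_le (hsa1.trans hτ.1.le), uIcc_of_le hsb]
            exact Icc_subset_Icc le_rfl hτb
          have hLi2 : IntervalIntegrable L volume s a1 := by
            apply hLsb.mono_set
            rw [uIcc_of_le hsa1, uIcc_of_le hsb]
            exact Icc_subset_Icc le_rfl ha1b
          have hGdiff : ∫ ξ in a1..τ, L ξ = G τ - G a1 :=
            (intervalIntegral.integral_interval_sub_left hLi1 hLi2).symm
          have hτIcc : τ ∈ Icc s b := ⟨hsa1.trans hτ.1.le, hτb⟩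
          have ha1Icc : a1 ∈ Icc s b := ⟨hsa1, ha1b⟩
          have hdist : dist τ a1 < δ := by
            rw [Real.dist_eq, _root_.abs_of_nonneg (by linarith [hτ.1])]
            linarith [hτ.2, hgap, hδ0]
          have hGlt := hδ τ hτIcc a1 ha1Icc hdist
          rw [Real.dist_eq] at hGlt
          have hint_nonneg : 0 ≤ ∫ ξ in a1..τ, L ξ :=
            intervalIntegral.integral_nonneg hτ.1.le (fun u _ => hL0 u)
          have habs : |(∫ ξ in a1..τ, L ξ) * ‖E.φ s σm 0‖|
              = (∫ ξ in a1..τ, L ξ) * ‖E.φ s σm 0‖ :=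
            _root_.abs_of_nonneg (mul_nonneg hint_nonneg hM0)
          rw [habs]
          have hhalf : (∫ ξ in a1..τ, L ξ) ≤ 1/2 := by
            rw [hGdiff]
            calc G τ - G a1 ≤ |G τ - G a1| := le_abs_self _
            _ ≤ 1/2 := hGlt.le
          exact mul_le_mul_of_nonneg_right hhalf hM0
        have hMle : ‖E.φ s σm 0‖ ≤ (1/2) * ‖E.φ s σm 0‖ := by
          by_cases hσm1 : σm ≤ a1
          · have hz : E.φ s σm 0 = 0 := ih σm ⟨hsa1.trans hσmem.1, hσm1⟩
            rw [hz]; simp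
          · push_neg at hσm1
            exact hIoc σm ⟨hσm1, hσmem.2⟩
        have hMz : ‖E.φ s σm 0‖ = 0 := by linarith
        have hσb := hIoc σ ⟨hσ1, hσ2⟩
        rw [hMz] at hσb
        exact norm_le_zero_iff.mp (by linarith)
    have hallc : ∀ σ ∈ Icc s c, E.φ s σ 0 = 0 := by
      intro σ hσ
      obtain ⟨n, hn⟩ := exists_nat_ge ((c - s) / (δ/2))
      have hcn : c ≤ s + n * (δ/2) := by
        rw [div_le_iff₀ (by linarith)] at hn
        linarith
      exact key n σ (by rwa [min_eq_right hcn])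
    have hceb : c = b := by
      by_contra hne
      have hlt : c < b := lt_of_le_of_ne hcb hne
      have hv0 : E.φ s c 0 = 0 := hallc c ⟨hsc, le_rfl⟩
      have hcw : ContinuousWithinAt (fun τ => E.φ s τ 0) (Icc s b) c := hvcont c ⟨hsc, hcb⟩
      have hev : ∀ᶠ τ in 𝓝[Icc s b] c, ‖E.φ s τ 0‖ < 1/4 := by
        have ht2 : Tendsto (fun τ => ‖E.φ s τ 0‖) (𝓝[Icc s b] c) (𝓝 0) := by
          have h3 := hcw.tendsto.norm
          rwa [hv0, norm_zero] at h3
        exact ht2.eventually_lt_const (by norm_num)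
      obtain ⟨ε, hε0, hball⟩ := Metric.mem_nhdsWithin_iff.mp hev
      set c' := min b (c + ε/2) with hc'
      have hcc' : c < c' := lt_min hlt (by linarith)
      have hc'B : c' ∈ B := by
        refine ⟨⟨hsc.trans hcc'.le, min_le_left _ _⟩, ?_⟩
        intro σ hσ
        by_cases hσc : σ ≤ c
        · exact hIcc14 σ ⟨hσ.1, hσc⟩
        · push_neg at hσc
          have hσball : σ ∈ Metric.ball c ε ∩ Icc s b := by
            constructor
            · rw [Metric.mem_ball, Real.dist_eq, _root_.abs_of_pos (by linarith)]
              have h4 : σ ≤ c + ε/2 := hσ.2.trans (min_le_right _ _)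
              linarith
            · exact ⟨hσ.1, hσ.2.trans (min_le_left _ _)⟩
          exact (hball hσball).le
      have hle := le_csSup hBb hc'B
      linarith
    intro σ hσ
    exact hallc σ ⟨hσ.1, by rw [hceb]; exact hσ.2⟩
  by_cases hca : IntervalIntegrable F volume s t
  · exact Q t hst le_rfl hca t ⟨hst, le_rfl⟩
  · have h0 : ∫ ξ in s..t, F ξ = 0 := intervalIntegral.integral_undef hca
    rw [hveq t hst, h0, neg_zero]

lemma EvolutionFamilyDisk0.norm_phi_le (E : EvolutionFamilyDisk0) {s t : ℝ}
    (hs : 0 ≤ s) (hst : s ≤ t) {z : ℂ} (hz : z ∈ UD) : ‖E.φ s t z‖ ≤ ‖z‖ := by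
  have hd := E.holo hs hst
  have hm := E.mapsTo hs hst
  rw [UD_eq] at hd hm hz
  have h := Complex.norm_le_norm_of_mapsTo_ball hd (hm.mono_right Metric.ball_subset_closedBall) (E.phi_zero_fixed hs hst)
      (mem_ball_zero_iff.mp hz)
  simpa using h

/-- For a non-trivial evolution family in `𝔻` with common Denjoy-Wolff point `0` and
associated spectral function `Λ` (locally absolutely continuous, `Λ(0)=0`, `Re Λ ≥ 0`
nondecreasing, `ψ_{s,t}'(0) = exp(Λ(s) − Λ(t))`), the following are equivalent:
(a) `Re Λ(t) → +∞`; (b) for every `s ≥ 0`, `ψ_{s,t} → 0` locally uniformly;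
(c) for some `s ≥ 0`, `ψ_{s,t} → 0` locally uniformly. -/
theorem spectral_function_tendsto_zero_iff (E : EvolutionFamilyDisk0)
    (hE : E.Nontrivial) (Λ : ℝ → ℂ)
    (hΛ_ac : ∃ g : ℝ → ℂ, (∀ T : ℝ, 0 < T → MeasureTheory.IntegrableOn g (Set.Icc 0 T)) ∧
      ∀ t : ℝ, 0 ≤ t → Λ t = ∫ ξ in (0:ℝ)..t, g ξ)
    (hΛ0 : Λ 0 = 0)
    (hΛre : ∀ t : ℝ, 0 ≤ t → 0 ≤ (Λ t).re)
    (hΛmono : MonotoneOn (fun t => (Λ t).re) (Set.Ici (0:ℝ)))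
    (hspec : ∀ ⦃s t : ℝ⦄, 0 ≤ s → s ≤ t →
      deriv (E.φ s t) 0 = Complex.exp (Λ s - Λ t)) :
    (Tendsto (fun t => (Λ t).re) atTop atTop ↔
      (∀ s : ℝ, 0 ≤ s → ∀ K : Set ℂ, K ⊆ UD → IsCompact K →
        TendstoUniformlyOn (fun t z => E.φ s t z) (fun _ => 0) atTop K)) ∧
    ((∀ s : ℝ, 0 ≤ s → ∀ K : Set ℂ, K ⊆ UD → IsCompact K →
        TendstoUniformlyOn (fun t z => E.φ s t z) (fun _ => 0) atTop K) ↔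
      (∃ s : ℝ, 0 ≤ s ∧ ∀ K : Set ℂ, K ⊆ UD → IsCompact K →
        TendstoUniformlyOn (fun t z => E.φ s t z) (fun _ => 0) atTop K)) := by
  -- (a) → (b)
  have hab : Tendsto (fun t => (Λ t).re) atTop atTop →
      ∀ s : ℝ, 0 ≤ s → ∀ K : Set ℂ, K ⊆ UD → IsCompact K →
        TendstoUniformlyOn (fun t z => E.φ s t z) (fun _ => 0) atTop K := by
    intro hΛ s hs K hKU hKc
    rcases K.eq_empty_or_nonempty with hK | hK
    · rw [Metric.tendstoUniformlyOn_iff]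
      intro ε hε
      filter_upwards with τ z hz
      rw [hK] at hz
      exact absurd hz (Set.notMem_empty z)
    obtain ⟨z0, hz0K, hz0max⟩ := hKc.exists_isMaxOn hK continuous_norm.continuousOn
    set R := ‖z0‖ with hRdef
    have hR1 : R < 1 := by
      have h1 := hKU hz0K
      rw [UD_eq, mem_ball_zero_iff] at h1
      exact h1
    have hR0 : 0 ≤ R := norm_nonneg _
    have hKR : ∀ z ∈ K, ‖z‖ ≤ R := fun z hz => hz0max hz
    set δ : ℝ := (1 - R)/(2*(1+R)) with hδdef
    have hδ0 : 0 < δ := div_pos (by linarith) (by linarith)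
    have hδ1 : δ < 1 := by
      rw [hδdef, div_lt_one (by linarith)]
      nlinarith
    have hδR : δ * R < 1 := by nlinarith
    set q : ℝ := (δ + R)/(1 - δ*R) with hqdef
    have hq0 : 0 ≤ q := div_nonneg (by linarith) (by linarith)
    have hq1 : q < 1 := by
      rw [hqdef, div_lt_one (by linarith)]
      have hδ1R : δ * (1+R) = (1-R)/2 := by
        rw [hδdef]; field_simp
      nlinarith
    have main : ∀ n : ℕ, ∃ U : ℝ, s ≤ U ∧
        ∀ τ, U ≤ τ → ∀ z ∈ K, ‖E.φ s τ z‖ ≤ R * q^n := by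
      intro n
      induction n with
      | zero =>
        refine ⟨s, le_rfl, fun τ hτ z hz => ?_⟩
        rw [pow_zero, mul_one]
        exact (E.norm_phi_le hs hτ (hKU hz)).trans (hKR z hz)
      | succ n ih =>
        obtain ⟨U, hsU, hU⟩ := ih
        have hev : ∀ᶠ τ in atTop, (Λ U).re - Real.log δ ≤ (Λ τ).re :=
          hΛ.eventually_ge_atTop _
        obtain ⟨M, hM⟩ := eventually_atTop.mp hev
        refine ⟨max M U, hsU.trans (le_max_right M U), fun τ hτ z hz => ?_⟩
        have hUτ : U ≤ τ := (le_max_right M U).trans hτ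
        have hsU0 : 0 ≤ U := hs.trans hsU
        have hw : E.φ s U z ∈ UD := E.mapsTo hs hsU (hKU hz)
        have hcomp : E.φ s τ z = E.φ U τ (E.φ s U z) := E.comp hs hsU hUτ z (hKU hz)
        have hwn : ‖E.φ s U z‖ ≤ R * q^n := hU U le_rfl z hz
        have hder : ‖deriv (E.φ U τ) 0‖ = Real.exp ((Λ U).re - (Λ τ).re) := by
          rw [hspec hsU0 hUτ, Complex.norm_exp, Complex.sub_re]
        have hderδ : ‖deriv (E.φ U τ) 0‖ ≤ δ := by
          rw [hder]
          have h6 : (Λ U).re - (Λ τ).re ≤ Real.log δ := by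
            have := hM τ ((le_max_left M U).trans hτ)
            linarith
          calc Real.exp ((Λ U).re - (Λ τ).re) ≤ Real.exp (Real.log δ) :=
                Real.exp_le_exp.mpr h6
          _ = δ := Real.exp_log hδ0
        have hderlt : ‖deriv (E.φ U τ) 0‖ < 1 := lt_of_le_of_lt hderδ hδ1
        have hd := E.holo hsU0 hUτ
        have hm := E.mapsTo hsU0 hUτ
        rw [UD_eq] at hd hm
        have hf0 := E.phi_zero_fixed hsU0 hUτ
        have hw' : E.φ s U z ∈ Metric.ball (0:ℂ) 1 := by rw [← UD_eq]; exact hw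
        have hsp := schwarz_pick_zero hd hf0 hm hderlt hw'
        have hx0 : (0:ℝ) ≤ ‖E.φ U τ (E.φ s U z)‖ := norm_nonneg _
        have hd0 : (0:ℝ) ≤ ‖deriv (E.φ U τ) 0‖ := norm_nonneg _
        have hw0 : (0:ℝ) ≤ ‖E.φ s U z‖ := norm_nonneg _
        have hwR : ‖E.φ s U z‖ ≤ R := by
          refine hwn.trans ?_
          have := pow_le_one₀ hq0 hq1.le (n := n)
          nlinarith
        have hdw : ‖deriv (E.φ U τ) 0‖ * ‖E.φ s U z‖ ≤ δ * R :=
          mul_le_mul hderδ hwR hw0 hδ0.le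
        have key : ‖E.φ U τ (E.φ s U z)‖ * (1 - δ*R) ≤ ‖E.φ s U z‖ * (δ + R) := by
          calc ‖E.φ U τ (E.φ s U z)‖ * (1 - δ*R)
              ≤ ‖E.φ U τ (E.φ s U z)‖ * (1 - ‖deriv (E.φ U τ) 0‖ * ‖E.φ s U z‖) :=
                mul_le_mul_of_nonneg_left (by linarith) hx0
          _ ≤ ‖E.φ s U z‖ * (‖deriv (E.φ U τ) 0‖ + ‖E.φ s U z‖) := hsp
          _ ≤ ‖E.φ s U z‖ * (δ + R) :=
                mul_le_mul_of_nonneg_left (add_le_add hderδ hwR) hw0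
        have hxq : ‖E.φ U τ (E.φ s U z)‖ ≤ ‖E.φ s U z‖ * q := by
          rw [hqdef, mul_div_assoc']
          rw [le_div_iff₀ (by linarith)]
          exact key
        rw [hcomp]
        calc ‖E.φ U τ (E.φ s U z)‖ ≤ ‖E.φ s U z‖ * q := hxq
        _ ≤ (R * q^n) * q := mul_le_mul_of_nonneg_right hwn hq0
        _ = R * q^(n+1) := by ring
    rw [Metric.tendstoUniformlyOn_iff]
    intro ε hε
    have hpow : Tendsto (fun n : ℕ => R * q^n) atTop (𝓝 0) := by
      have h1 := tendsto_pow_atTop_nhds_zero_of_lt_one hq0 hq1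
      have h2 := h1.const_mul R
      rwa [mul_zero] at h2
    obtain ⟨n, hn⟩ := (hpow.eventually_lt_const hε).exists
    obtain ⟨U, hsU, hU⟩ := main n
    rw [eventually_atTop]
    refine ⟨U, fun τ hτ z hz => ?_⟩
    rw [dist_comm, dist_zero_right]
    exact lt_of_le_of_lt (hU τ hτ z hz) hn
  -- (c) → (a)
  have hca : (∃ s : ℝ, 0 ≤ s ∧ ∀ K : Set ℂ, K ⊆ UD → IsCompact K →
        TendstoUniformlyOn (fun t z => E.φ s t z) (fun _ => 0) atTop K) →
      Tendsto (fun t => (Λ t).re) atTop atTop := by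
    rintro ⟨s, hs, hc⟩
    have hkey : Tendsto (fun τ => Real.exp ((Λ s).re - (Λ τ).re)) atTop (𝓝 0) := by
      rw [Metric.tendsto_nhds]
      intro ε hε
      set ρ : ℝ := min (ε/4) (1/2) with hρdef
      have hρ0 : 0 < ρ := lt_min (by linarith) one_half_pos
      have hρ1 : ρ < 1 := lt_of_le_of_lt (min_le_right _ _) (by norm_num)
      have hKc : IsCompact (Metric.closedBall (0:ℂ) ρ) := isCompact_closedBall _ _
      have hKU : Metric.closedBall (0:ℂ) ρ ⊆ UD := by
        rw [UD_eq]
        exact Metric.closedBall_subset_ball hρ1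
      have hcv := hc _ hKU hKc
      rw [Metric.tendstoUniformlyOn_iff] at hcv
      have hev := hcv (ρ * ε/8) (by positivity)
      filter_upwards [hev, eventually_ge_atTop s] with τ h1 h2
      have hd := E.holo hs h2
      have hm := E.mapsTo hs h2
      rw [UD_eq] at hd hm
      have hf0 := E.phi_zero_fixed hs h2
      have hη : ∀ z ∈ Metric.closedBall (0:ℂ) ρ, ‖E.φ s τ z‖ ≤ ρ * ε/8 := by
        intro z hz
        have h3 := h1 z hz
        rw [dist_comm, dist_zero_right] at h3
        exact h3.le
      have hb := norm_deriv_le_of_small hd hf0 hm hρ0 hρ1 hη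
      have hder : ‖deriv (E.φ s τ) 0‖ = Real.exp ((Λ s).re - (Λ τ).re) := by
        rw [hspec hs h2, Complex.norm_exp, Complex.sub_re]
      have h9 : (ρ * ε/8)/ρ = ε/8 := by
        field_simp
      rw [Real.dist_eq, sub_zero, _root_.abs_of_pos (Real.exp_pos _)]
      rw [← hder]
      have hρε : ρ ≤ ε/4 := min_le_left _ _
      calc ‖deriv (E.φ s τ) 0‖ ≤ (ρ * ε/8)/ρ + 2 * ρ := hb
      _ = ε/8 + 2*ρ := by rw [h9]
      _ ≤ ε/8 + ε/2 := by linarith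
      _ < ε := by linarith
    have h10 : Tendsto (fun τ => (Λ s).re - (Λ τ).re) atTop atBot :=
      Real.tendsto_exp_comp_nhds_zero.mp hkey
    rw [Filter.tendsto_atTop]
    intro C
    filter_upwards [Filter.tendsto_atBot.mp h10 ((Λ s).re - C)] with τ hτ
    linarith
  constructor
  · exact ⟨fun h => hab h, fun hb => hca ⟨0, le_rfl, hb 0 le_rfl⟩⟩
  · exact ⟨fun hb => ⟨0, le_rfl, hb 0 le_rfl⟩, fun hc => hab (hca hc)⟩
end
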